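/- Let 𝒰 ≠ {Ω_n, ∅} be a union closed set on Ω_n with non-empty members A₁ < A₂ < ⋯ < A_k (in the order <) such that 𝒰 is not canonical but the family {A₁, …, A_{k−1}, ∅} is canonical, and let m = |A_k|. Then every permutation Π of Ω_n with s(Π(𝒰)) lexicographically smaller than s(𝒰) satisfies Π(𝒰_{m+1}) = 𝒰_{m+1}, where 𝒰_{m+1} is the set of all members of 𝒰 of cardinality at least m+1. -/

import Mathlib

/-- Binary encoding of a subset `A ⊆ Ω_n = {1,…,n}` (modeled as `Finset (Fin n)`):
`b(A) = Σ_{i∈A} 2^(i-1)`. -/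
def bcode {n : ℕ} (A : Finset (Fin n)) : ℕ := ∑ i ∈ A, 2 ^ (i : ℕ)

/-- The order on subsets of `Ω_n`: `A < B` iff `B` has fewer elements than `A`
(sets with more elements are smaller), or they have the same number of elements
and `b(A) < b(B)`. -/
def setLT {n : ℕ} (A B : Finset (Fin n)) : Prop :=
  B.card < A.card ∨ (A.card = B.card ∧ bcode A < bcode B)

/-- A numeric key encoding the order `setLT`: since `bcode A < 2^n`, we have
`setLT A B ↔ key A < key B`. -/
def key {n : ℕ} (A : Finset (Fin n)) : ℕ := (n - A.card) * 2 ^ n + bcode A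

/-- A union closed set on `Ω_n`: a family of subsets of `Ω_n` closed under
pairwise unions that contains the full set `Ω_n` and the empty set. -/
def IsUCS {n : ℕ} (U : Finset (Finset (Fin n))) : Prop :=
  (∀ A ∈ U, ∀ B ∈ U, A ∪ B ∈ U) ∧ Finset.univ ∈ U ∧ ∅ ∈ U

/-- The action of a permutation `Π` of `Ω_n` on a family of sets:
each element of each set is replaced by its image under `Π`. -/
def permFam {n : ℕ} (π : Equiv.Perm (Fin n)) (U : Finset (Finset (Fin n))) :
    Finset (Finset (Fin n)) := U.image (fun A => A.image π)

/-- The string `s(𝒰)` of a family `𝒰`: the keys of the non-empty members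
listed in increasing order `A₁ < A₂ < ⋯ < A_k` (w.r.t. `setLT`). -/
def sStr {n : ℕ} (U : Finset (Finset (Fin n))) : List ℕ :=
  ((U.filter (fun A => A ≠ ∅)).image key).sort (· ≤ ·)

/-- A family `𝒰` is canonical if `s(𝒰)` is lexicographically ≤ `s(Π(𝒰))` for
every permutation `Π` of `Ω_n`, i.e. no permutation yields a lexicographically
smaller string. -/
def IsCanonical {n : ℕ} (U : Finset (Finset (Fin n))) : Prop :=
  ∀ π : Equiv.Perm (Fin n), ¬ List.Lex (· < ·) (sStr (permFam π U)) (sStr U)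

/-! ### Auxiliary lemmas -/

lemma bcode_injective {n : ℕ} : Function.Injective (bcode (n := n)) := by
  intro A B h
  have hA : bcode A = ∑ i ∈ A.image (Fin.val), 2 ^ i := by
    rw [Finset.sum_image (by intro x _ y _ hxy; exact Fin.val_injective hxy)]; rfl
  have hB : bcode B = ∑ i ∈ B.image (Fin.val), 2 ^ i := by
    rw [Finset.sum_image (by intro x _ y _ hxy; exact Fin.val_injective hxy)]; rfl
  have himg : A.image (Fin.val) = B.image (Fin.val) := by
    have := congrArg (fun k : ℕ => k.bitIndices.toFinset) (hA ▸ hB ▸ h)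
    simpa using this
  exact Finset.image_injective Fin.val_injective himg

lemma sum_range_two_pow (n : ℕ) : ∑ i ∈ Finset.range n, 2 ^ i = 2 ^ n - 1 := by
  induction n with
  | zero => simp
  | succ k ih =>
    rw [Finset.sum_range_succ, ih]
    have : 1 ≤ 2 ^ k := Nat.one_le_two_pow
    omega

lemma bcode_lt_two_pow {n : ℕ} (A : Finset (Fin n)) : bcode A < 2 ^ n := by
  have h1 : bcode A ≤ ∑ i : Fin n, 2 ^ (i : ℕ) :=
    Finset.sum_le_sum_of_subset (Finset.subset_univ A)
  have h2 : ∑ i : Fin n, 2 ^ (i : ℕ) = 2 ^ n - 1 := by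
    rw [Fin.sum_univ_eq_sum_range, sum_range_two_pow]
  have : 1 ≤ 2 ^ n := Nat.one_le_two_pow
  omega

lemma key_injective {n : ℕ} : Function.Injective (key (n := n)) := by
  intro A B h
  have hb : bcode A = bcode B := by
    have hA := bcode_lt_two_pow A
    have hB := bcode_lt_two_pow B
    have h' := congrArg (· % 2 ^ n) h
    simp only [key] at h'
    have key_mod : ∀ a b : ℕ, (a * 2 ^ n + b) % 2 ^ n = b % 2 ^ n := fun a b => by
      rw [add_comm, Nat.add_mul_mod_self_right]
    rwa [key_mod, key_mod, Nat.mod_eq_of_lt hA, Nat.mod_eq_of_lt hB] at h'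
  exact bcode_injective hb

lemma key_lt_key {n m : ℕ} (B C : Finset (Fin n)) (hB : m + 1 ≤ B.card)
    (hC : C.card ≤ m) : key B < key C := by
  have hBn : B.card ≤ n := by simpa using B.card_le_univ
  have hb := bcode_lt_two_pow B
  have h1 : key B < (n - m) * 2 ^ n := by
    have : n - B.card + 1 ≤ n - m := by omega
    calc key B < (n - B.card) * 2 ^ n + 2 ^ n := by
          exact Nat.add_lt_add_left hb _
      _ = (n - B.card + 1) * 2 ^ n := by ring
      _ ≤ (n - m) * 2 ^ n := Nat.mul_le_mul_right _ this
  have h2 : (n - m) * 2 ^ n ≤ key C := by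
    have : n - m ≤ n - C.card := by omega
    calc (n - m) * 2 ^ n ≤ (n - C.card) * 2 ^ n := Nat.mul_le_mul_right _ this
      _ ≤ key C := Nat.le_add_right _ _
  omega

/-- Sorting a union of two finsets where everything in the first is smaller. -/
lemma sort_union_split (S T : Finset ℕ) (h : ∀ x ∈ S, ∀ y ∈ T, x < y) :
    (S ∪ T).sort (· ≤ ·) = S.sort (· ≤ ·) ++ T.sort (· ≤ ·) := by
  have hdisj : Disjoint S T := by
    rw [Finset.disjoint_left]
    intro a haS haT
    exact absurd (h a haS a haT) (lt_irrefl a)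
  refine (fun hp hs => List.Perm.eq_of_pairwise' (Finset.pairwise_sort _ _) hs hp) ?_ ?_
  · rw [← Multiset.coe_eq_coe]
    rw [← Multiset.coe_add, Finset.sort_eq, Finset.sort_eq, Finset.sort_eq,
      ← Finset.disjUnion_eq_union S T hdisj]
    rfl
  · rw [List.pairwise_append]
    refine ⟨Finset.pairwise_sort _ _, Finset.pairwise_sort _ _, ?_⟩
    intro x hx y hy
    exact le_of_lt (h x (by simpa using (Finset.mem_sort _).1 hx)
      y (by simpa using (Finset.mem_sort _).1 hy))

/-- Decomposition of `sStr` into the high-cardinality block and the rest. -/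
lemma sStr_split {n : ℕ} (m : ℕ) (V : Finset (Finset (Fin n))) :
    sStr V = ((V.filter (fun B => m + 1 ≤ B.card)).image key).sort (· ≤ ·) ++
      ((V.filter (fun B => B ≠ ∅ ∧ B.card ≤ m)).image key).sort (· ≤ ·) := by
  have hsplit : V.filter (fun A => A ≠ ∅) =
      V.filter (fun B => m + 1 ≤ B.card) ∪ V.filter (fun B => B ≠ ∅ ∧ B.card ≤ m) := by
    rw [← Finset.filter_or]
    apply Finset.filter_congr
    intro B _
    constructor
    · intro hB
      rcases le_or_gt (m + 1) B.card with h | h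
      · exact Or.inl h
      · exact Or.inr ⟨hB, by omega⟩
    · rintro (h | ⟨h, -⟩)
      · intro hemp
        rw [hemp] at h; simp at h
      · exact h
  rw [sStr, hsplit, Finset.image_union]
  apply sort_union_split
  intro x hx y hy
  simp only [Finset.mem_image, Finset.mem_filter] at hx hy
  obtain ⟨B, ⟨-, hB⟩, rfl⟩ := hx
  obtain ⟨C, ⟨-, -, hC⟩, rfl⟩ := hy
  exact key_lt_key B C hB hC

/-- Lexicographic bookkeeping: if `P' ++ X < P ++ Y` but not `P' ++ Z < P ++ W`,
with `P, P'` of equal length, then `P' = P`. -/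
lemma lex_prefix_eq : ∀ (P P' X Y Z W : List ℕ), P.length = P'.length →
    List.Lex (· < ·) (P' ++ X) (P ++ Y) → ¬ List.Lex (· < ·) (P' ++ Z) (P ++ W) →
    P' = P := by
  intro P
  induction P with
  | nil => intro P' _ _ _ _ hlen _ _; exact List.length_eq_zero_iff.1 hlen.symm
  | cons a p ih =>
    intro P' X Y Z W hlen h1 h2
    match P' with
    | [] => simp at hlen
    | a' :: p' =>
      simp only [List.length_cons, Nat.succ.injEq] at hlen
      simp only [List.cons_append] at h1 h2
      cases h1 with
      | rel h => exact absurd (List.Lex.rel h) h2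
      | cons h1' =>
        have h2' : ¬ List.Lex (· < ·) (p' ++ Z) (p ++ W) :=
          fun h => h2 (List.Lex.cons h)
        rw [ih p' X Y Z W hlen h1' h2']

/-- Let `𝒰 ≠ {Ω_n, ∅}` be a union closed set with non-empty members
`A₁ < A₂ < ⋯ < A_k` (so `A = A_k` is its largest non-empty member), such that `𝒰`
is not canonical but `{A₁, …, A_{k-1}, ∅} = 𝒰 \ {A}` is canonical, and let `m = |A_k|`.
Then every permutation `Π` with `s(Π(𝒰))` lexicographically smaller than `s(𝒰)`
fixes the subfamily `𝒰_{m+1}` of members of cardinality at least `m+1`. -/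
theorem lex_smaller_perm_fixes_upper {n : ℕ} (U : Finset (Finset (Fin n))) (hU : IsUCS U)
    (hne : U ≠ {Finset.univ, ∅})
    (A : Finset (Fin n)) (hA : A ∈ U) (hAne : A ≠ ∅)
    (hmax : ∀ B ∈ U, B ≠ ∅ → B ≠ A → setLT B A)
    (hnotcan : ¬ IsCanonical U) (hcan : IsCanonical (U.erase A))
    (π : Equiv.Perm (Fin n))
    (hπ : List.Lex (· < ·) (sStr (permFam π U)) (sStr U)) :
    permFam π (U.filter (fun B => A.card + 1 ≤ B.card)) =
      U.filter (fun B => A.card + 1 ≤ B.card) := by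
  set m := A.card with hm
  have hcardimg : ∀ (B : Finset (Fin n)), (B.image π).card = B.card :=
    fun B => Finset.card_image_of_injective B π.injective
  have hfilter_perm : ∀ V : Finset (Finset (Fin n)),
      (permFam π V).filter (fun B => m + 1 ≤ B.card) =
        permFam π (V.filter (fun B => m + 1 ≤ B.card)) := by
    intro V
    ext C
    simp only [permFam, Finset.mem_filter, Finset.mem_image]
    constructor
    · rintro ⟨⟨B, hB, rfl⟩, hc⟩
      exact ⟨B, ⟨hB, by rwa [hcardimg] at hc⟩, rfl⟩
    · rintro ⟨B, ⟨hB, hc⟩, rfl⟩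
      exact ⟨⟨B, hB, rfl⟩, by rwa [hcardimg]⟩
  have hErase : (U.erase A).filter (fun B => m + 1 ≤ B.card) =
      U.filter (fun B => m + 1 ≤ B.card) := by
    ext B
    simp only [Finset.mem_filter, Finset.mem_erase]
    constructor
    · rintro ⟨⟨-, hB⟩, hc⟩; exact ⟨hB, hc⟩
    · rintro ⟨hB, hc⟩
      refine ⟨⟨?_, hB⟩, hc⟩
      rintro rfl; omega
  set Hi := U.filter (fun B => m + 1 ≤ B.card) with hHi
  have h1 := sStr_split m U
  have h2 := sStr_split m (permFam π U)
  have h3 := sStr_split m (U.erase A)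
  have h4 := sStr_split m (permFam π (U.erase A))
  rw [hfilter_perm, ← hHi] at h2
  rw [hfilter_perm, hErase] at h4
  rw [hErase] at h3
  rw [← hHi] at h1
  have hHiperm : (permFam π Hi).card = Hi.card :=
    Finset.card_image_of_injective Hi (Finset.image_injective π.injective)
  have hlen : ((Hi.image key).sort (· ≤ ·)).length =
      (((permFam π Hi).image key).sort (· ≤ ·)).length := by
    rw [Finset.length_sort, Finset.length_sort,
      Finset.card_image_of_injective _ key_injective,
      Finset.card_image_of_injective _ key_injective, hHiperm]
  have hcanπ := hcan π
  rw [h4, h3] at hcanπ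
  rw [h2, h1] at hπ
  have hP := lex_prefix_eq _ _ _ _ _ _ hlen hπ hcanπ
  have himgkey : (permFam π Hi).image key = Hi.image key := by
    ext a
    rw [← Finset.mem_sort (α := ℕ) (· ≤ ·), hP, Finset.mem_sort]
  exact Finset.image_injective key_injective himgkey
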